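/- Let $F$ be a finite field with $q$ elements. If $m > 1$ and there exists an $m \times \ell$ matrix over $F$ that is non-singular by columns, then $\ell \le q$. Conversely (upper-row direction), if $m \le \ell \le q$ then such a matrix exists. -/

import Mathlib

/-- An `m × ℓ` matrix over a commutative ring is *non-singular by columns* if, for every
`k ≤ m` and every strictly increasing choice of `k` columns, the `k × k` determinant formed
from the first `k` rows of `A` and those columns is a unit. -/
def NonsingularByColumns {R : Type*} [CommRing R] {m l : ℕ}
    (A : Matrix (Fin m) (Fin l) R) : Prop :=
  ∀ (k : ℕ) (hk : k ≤ m) (c : Fin k → Fin l), StrictMono c →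
    IsUnit (Matrix.det (Matrix.of fun i j : Fin k => A (Fin.castLE hk i) (c j)))

open Matrix in
theorem stmt_6 {F : Type*} [Field F] [Fintype F] (m l : ℕ) :
    (1 < m → (∃ A : Matrix (Fin m) (Fin l) F, NonsingularByColumns A) →
      l ≤ Fintype.card F) ∧
    (m ≤ l → l ≤ Fintype.card F →
      ∃ A : Matrix (Fin m) (Fin l) F, NonsingularByColumns A) := by
  constructor
  · rintro hm ⟨A, hA⟩
    haveI : NeZero m := ⟨by omega⟩
    have h0 : ∀ j : Fin l, A 0 j ≠ 0 := by
      intro j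
      have h := hA 1 (by omega) (fun _ => j) (Subsingleton.strictMono _)
      rw [Matrix.det_fin_one] at h
      have h' : IsUnit (A 0 j) := by
        convert h using 2
        rw [Matrix.of_apply]
        exact congrArg (fun r => A r j) (Fin.ext (by simp))
      exact h'.ne_zero
    have main : ∀ x y : Fin l, x < y → A 1 x * (A 0 x)⁻¹ ≠ A 1 y * (A 0 y)⁻¹ := by
      intro x y hxy heq
      have hc : StrictMono (![x, y] : Fin 2 → Fin l) := by
        intro a b hab
        fin_cases a <;> fin_cases b <;> simp_all
      have h := hA 2 (by omega) ![x, y] hc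
      rw [Matrix.det_fin_two, isUnit_iff_ne_zero] at h
      apply h
      have e0 : Fin.castLE (show 2 ≤ m by omega) (0 : Fin 2) = (0 : Fin m) := rfl
      have e1 : Fin.castLE (show 2 ≤ m by omega) (1 : Fin 2) = (1 : Fin m) := by
        apply Fin.ext
        simp [Fin.val_one, Nat.mod_eq_of_lt hm]
      simp only [Matrix.of_apply, e0, e1, Matrix.cons_val_zero, Matrix.cons_val_one,
        Matrix.head_cons]
      have hx := h0 x
      have hy := h0 y
      field_simp at heq
      linear_combination -heq
    have key : Function.Injective (fun j : Fin l => A 1 j * (A 0 j)⁻¹) := by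
      intro a b hab
      by_contra hne
      rcases lt_or_gt_of_ne hne with h | h
      · exact main a b h hab
      · exact main b a h hab.symm
    calc l = Fintype.card (Fin l) := (Fintype.card_fin l).symm
    _ ≤ Fintype.card F := Fintype.card_le_of_injective _ key
  · intro hml hlq
    have hcard : Fintype.card (Fin l) ≤ Fintype.card F := by simpa using hlq
    obtain ⟨f⟩ := Function.Embedding.nonempty_of_card_le hcard
    refine ⟨Matrix.of fun i j => f j ^ (i : ℕ), ?_⟩
    intro k hk c hc
    have ht : Matrix.of (fun i j : Fin k =>
        (Matrix.of fun (i : Fin m) (j : Fin l) => (f j : F) ^ (i : ℕ)) (Fin.castLE hk i) (c j))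
        = (Matrix.vandermonde (fun i => f (c i)))ᵀ := by
      ext i j
      simp [Matrix.vandermonde, Matrix.transpose_apply]
    rw [isUnit_iff_ne_zero, ht, Matrix.det_transpose, Matrix.det_vandermonde]
    apply Finset.prod_ne_zero_iff.2
    intro i _
    apply Finset.prod_ne_zero_iff.2
    intro j hj
    simp only [Finset.mem_Ioi] at hj
    exact sub_ne_zero.2 (fun h => absurd (f.injective h) (hc hj).ne')
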